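/- For any real p×p matrix A and any k ∈ [p], sup over v ∈ B₀(k) of ‖Av‖₂ is at most √(p/k) times sup over u, w ∈ B₀(k) of uᵀAw. -/

import Mathlib

open scoped BigOperators Matrix

/-- The Euclidean (ℓ₂) norm of a vector in ℝᵖ. -/
noncomputable def norm2 {p : ℕ} (v : Fin p → ℝ) : ℝ := Real.sqrt (∑ i, v i ^ 2)

/-- The `k`-sparse unit ball `B₀(k) = {v : ‖v‖₂ ≤ 1, ‖v‖₀ ≤ k}`. -/
def B0 (p k : ℕ) : Set (Fin p → ℝ) :=
  {v | norm2 v ≤ 1 ∧ Set.ncard {i | v i ≠ 0} ≤ k}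

open Finset in
lemma count_mem_powersetCard (p k : ℕ) (hk : 1 ≤ k) (i : Fin p) :
    ((Finset.univ.powersetCard k).filter (fun S => i ∈ S)).card
      = (p - 1).choose (k - 1) := by
  have h1 : ((Finset.univ : Finset (Fin p)).erase i).card = p - 1 := by
    rw [card_erase_of_mem (mem_univ i), card_univ, Fintype.card_fin]
  rw [← h1, ← Finset.card_powersetCard (k-1) ((Finset.univ : Finset (Fin p)).erase i)]
  apply Finset.card_bij (fun S _ => S.erase i)
  · intro S hS
    rw [mem_filter, mem_powersetCard] at hS
    rw [mem_powersetCard]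
    refine ⟨fun x hx => ?_, ?_⟩
    · rw [mem_erase] at hx ⊢; exact ⟨hx.1, mem_univ _⟩
    · rw [card_erase_of_mem hS.2, hS.1.2]
  · intro S hS T hT h
    rw [mem_filter] at hS hT
    rw [← insert_erase hS.2, ← insert_erase hT.2, h]
  · intro T hT
    rw [mem_powersetCard] at hT
    have hiT : i ∉ T := fun h => (mem_erase.1 (hT.1 h)).1 rfl
    refine ⟨insert i T, ?_, ?_⟩
    · rw [mem_filter, mem_powersetCard]
      exact ⟨⟨fun x _ => mem_univ x, by rw [card_insert_of_notMem hiT, hT.2]; omega⟩,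
        mem_insert_self i T⟩
    · rw [erase_insert hiT]

lemma B0_sq_sum_le {p k : ℕ} {v : Fin p → ℝ} (hv : v ∈ B0 p k) : ∑ i, v i ^ 2 ≤ 1 := by
  have h1 := hv.1
  rw [norm2] at h1
  have h0 : (0:ℝ) ≤ ∑ i, v i ^ 2 := Finset.sum_nonneg fun i _ => sq_nonneg _
  nlinarith [Real.sq_sqrt h0, Real.sqrt_nonneg (∑ i, v i ^ 2)]

lemma B0_abs_le {p k : ℕ} {v : Fin p → ℝ} (hv : v ∈ B0 p k) (i : Fin p) : |v i| ≤ 1 := by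
  have h2 : v i ^ 2 ≤ 1 :=
    le_trans (Finset.single_le_sum (fun j _ => sq_nonneg (v j)) (Finset.mem_univ i))
      (B0_sq_sum_le hv)
  nlinarith [abs_nonneg (v i), sq_abs (v i)]

lemma zero_mem_B0 {p k : ℕ} : (0 : Fin p → ℝ) ∈ B0 p k := by
  constructor
  · simp [norm2]
  · simp

open Finset in
lemma sparse_block_le {p k : ℕ} (a : Fin p → ℝ) (M : ℝ)
    (hMdot : ∀ u ∈ B0 p k, u ⬝ᵥ a ≤ M)
    (S : Finset (Fin p)) (hScard : S.card = k) :
    ∑ i ∈ S, a i ^ 2 ≤ M ^ 2 := by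
  set t := ∑ i ∈ S, a i ^ 2 with ht
  have ht0 : 0 ≤ t := Finset.sum_nonneg fun i _ => sq_nonneg _
  rcases eq_or_lt_of_le ht0 with h | h
  · rw [← h]; positivity
  set s := Real.sqrt t with hsdef
  have hs : 0 < s := Real.sqrt_pos.2 h
  have hs2 : s ^ 2 = t := Real.sq_sqrt ht0
  set u : Fin p → ℝ := fun i => if i ∈ S then a i / s else 0 with hu
  have hu_sq : ∀ i, u i ^ 2 = if i ∈ S then a i ^ 2 / s ^ 2 else 0 := by
    intro i; simp only [hu]; split_ifs <;> simp [div_pow]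
  have husum : ∑ i, u i ^ 2 = 1 := by
    simp_rw [hu_sq]
    rw [Finset.sum_ite_mem, Finset.univ_inter, ← Finset.sum_div, ← ht, hs2,
      div_self (ne_of_gt h)]
  have huB : u ∈ B0 p k := by
    refine ⟨by rw [norm2, husum, Real.sqrt_one], ?_⟩
    have hsub : {i | u i ≠ 0} ⊆ (S : Set (Fin p)) := by
      intro i hi
      by_contra hiS
      exact hi (by simp only [hu]; rw [if_neg (by simpa using hiS)])
    calc Set.ncard {i | u i ≠ 0} ≤ Set.ncard (S : Set (Fin p)) :=
          Set.ncard_le_ncard hsub (S.finite_toSet)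
      _ = S.card := Set.ncard_coe_finset S
      _ = k := hScard
  have hdotu : u ⬝ᵥ a = s := by
    rw [dotProduct]
    have : ∀ i, u i * a i = if i ∈ S then a i ^ 2 / s else 0 := by
      intro i; simp only [hu]; split_ifs
      · rw [div_mul_eq_mul_div, sq]
      · simp
    simp_rw [this]
    rw [Finset.sum_ite_mem, Finset.univ_inter, ← Finset.sum_div, ← ht]
    rw [div_eq_iff (ne_of_gt hs), ← sq, hs2]
  have hsM : s ≤ M := hdotu ▸ hMdot u huB
  calc t = s ^ 2 := hs2.symm
    _ ≤ M ^ 2 := pow_le_pow_left₀ hs.le hsM 2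

open Finset in
lemma key_norm {p k : ℕ} (hk : 1 ≤ k) (hkp : k ≤ p) (a : Fin p → ℝ) (M : ℝ)
    (hM0 : 0 ≤ M) (hMdot : ∀ u ∈ B0 p k, u ⬝ᵥ a ≤ M) :
    norm2 a ≤ Real.sqrt ((p : ℝ) / k) * M := by
  set T := ∑ i, a i ^ 2 with hT
  set c1 : ℕ := (p - 1).choose (k - 1) with hc1
  set c2 : ℕ := p.choose k with hc2
  have hsum : (c1 : ℝ) * T = ∑ S ∈ Finset.univ.powersetCard k, ∑ i ∈ S, a i ^ 2 := by
    have h1 : ∀ S ∈ Finset.univ.powersetCard k,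
        ∑ i ∈ S, a i ^ 2 = ∑ i, if i ∈ S then a i ^ 2 else 0 := by
      intro S _; rw [Finset.sum_ite_mem, Finset.univ_inter]
    rw [Finset.sum_congr rfl h1, Finset.sum_comm]
    have h2 : ∀ i : Fin p, ∑ S ∈ Finset.univ.powersetCard k, (if i ∈ S then a i ^ 2 else 0)
        = (c1 : ℝ) * a i ^ 2 := by
      intro i
      rw [← Finset.sum_filter, Finset.sum_const, count_mem_powersetCard p k hk i,
        nsmul_eq_mul]
    rw [Finset.sum_congr rfl fun i _ => h2 i, ← Finset.mul_sum]
  have hbound : (c1 : ℝ) * T ≤ (c2 : ℝ) * M ^ 2 := by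
    rw [hsum]
    calc ∑ S ∈ Finset.univ.powersetCard k, ∑ i ∈ S, a i ^ 2
        ≤ ∑ _S ∈ Finset.univ.powersetCard k, M ^ 2 := by
          refine Finset.sum_le_sum fun S hS => ?_
          exact sparse_block_le a M hMdot S (Finset.mem_powersetCard.1 hS).2
      _ = (c2 : ℝ) * M ^ 2 := by
          rw [Finset.sum_const, Finset.card_powersetCard, Finset.card_univ,
            Fintype.card_fin, nsmul_eq_mul]
  have hid : (p : ℝ) * c1 = (c2 : ℝ) * k := by
    have := Nat.add_one_mul_choose_eq (p - 1) (k - 1)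
    have h1 : Nat.succ (p - 1) = p := by omega
    have h2 : k - 1 + 1 = k := by omega
    rw [Nat.succ_eq_add_one] at h1; rw [h1, h2] at this
    exact_mod_cast this
  have hc1pos : (0 : ℝ) < c1 := by
    exact_mod_cast Nat.choose_pos (by omega : k - 1 ≤ p - 1)
  have hk0 : (0 : ℝ) < k := by exact_mod_cast hk
  have h4 : (k : ℝ) * T ≤ (p : ℝ) * M ^ 2 := by
    have h5 : (c1 : ℝ) * ((k : ℝ) * T) ≤ (c1 : ℝ) * ((p : ℝ) * M ^ 2) := by
      calc (c1 : ℝ) * ((k : ℝ) * T) = (k : ℝ) * ((c1 : ℝ) * T) := by ring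
        _ ≤ (k : ℝ) * ((c2 : ℝ) * M ^ 2) := by
            exact mul_le_mul_of_nonneg_left hbound hk0.le
        _ = ((c2 : ℝ) * k) * M ^ 2 := by ring
        _ = ((p : ℝ) * c1) * M ^ 2 := by rw [hid]
        _ = (c1 : ℝ) * ((p : ℝ) * M ^ 2) := by ring
    exact le_of_mul_le_mul_left h5 hc1pos
  have hTle : T ≤ (p : ℝ) / k * M ^ 2 := by
    rw [div_mul_eq_mul_div, le_div_iff₀ hk0]
    linarith
  rw [norm2, ← hT]
  calc Real.sqrt T ≤ Real.sqrt ((p : ℝ) / k * M ^ 2) := Real.sqrt_le_sqrt hTle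
    _ = Real.sqrt ((p : ℝ) / k) * M := by
        rw [Real.sqrt_mul (by positivity), Real.sqrt_sq hM0]

/-- For any real `p × p` matrix `A` and `k ∈ [p]`,
`sup_{v ∈ B₀(k)} ‖Av‖₂ ≤ √(p/k) · sup_{u,w ∈ B₀(k)} uᵀ A w`. -/
theorem stmt1 (p k : ℕ) (hk : 1 ≤ k) (hkp : k ≤ p)
    (A : Matrix (Fin p) (Fin p) ℝ) :
    (⨆ v ∈ B0 p k, norm2 (A.mulVec v)) ≤
      Real.sqrt ((p : ℝ) / k) * ⨆ u ∈ B0 p k, ⨆ w ∈ B0 p k, u ⬝ᵥ A.mulVec w := by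
  set C : ℝ := ∑ i, ∑ j, |A i j| with hC
  have hC0 : 0 ≤ C := Finset.sum_nonneg fun i _ => Finset.sum_nonneg fun j _ => abs_nonneg _
  have hdot : ∀ u ∈ B0 p k, ∀ w ∈ B0 p k, u ⬝ᵥ A.mulVec w ≤ C := by
    intro u hu w hw
    rw [dotProduct, hC]
    refine Finset.sum_le_sum fun i _ => ?_
    have h1 : |A.mulVec w i| ≤ ∑ j, |A i j| := by
      rw [Matrix.mulVec, dotProduct]
      calc |∑ j, A i j * w j| ≤ ∑ j, |A i j * w j| := Finset.abs_sum_le_sum_abs _ _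
        _ ≤ ∑ j, |A i j| := Finset.sum_le_sum fun j _ => by
            rw [abs_mul]
            exact mul_le_of_le_one_right (abs_nonneg _) (B0_abs_le hw j)
    calc u i * A.mulVec w i ≤ |u i * A.mulVec w i| := le_abs_self _
      _ = |u i| * |A.mulVec w i| := abs_mul _ _
      _ ≤ 1 * (∑ j, |A i j|) :=
          mul_le_mul (B0_abs_le hu i) h1 (abs_nonneg _) zero_le_one
      _ = ∑ j, |A i j| := one_mul _
  have hbdd2 : ∀ u ∈ B0 p k,
      BddAbove (Set.range fun w => ⨆ _ : w ∈ B0 p k, u ⬝ᵥ A.mulVec w) := by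
    intro u hu
    refine ⟨C, ?_⟩
    rintro x ⟨w, rfl⟩
    exact Real.iSup_le (fun hw => hdot u hu w hw) hC0
  have hgC : ∀ u, (⨆ _ : u ∈ B0 p k, ⨆ w ∈ B0 p k, u ⬝ᵥ A.mulVec w) ≤ C := fun u =>
    Real.iSup_le
      (fun hu => Real.iSup_le
        (fun w => Real.iSup_le (fun hw => hdot u hu w hw) hC0) hC0) hC0
  have hbdd1 : BddAbove
      (Set.range fun u => ⨆ _ : u ∈ B0 p k, ⨆ w ∈ B0 p k, u ⬝ᵥ A.mulVec w) := by
    refine ⟨C, ?_⟩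
    rintro x ⟨u, rfl⟩
    exact hgC u
  set M : ℝ := ⨆ u ∈ B0 p k, ⨆ w ∈ B0 p k, u ⬝ᵥ A.mulVec w with hMdef
  have hMdot : ∀ u ∈ B0 p k, ∀ w ∈ B0 p k, u ⬝ᵥ A.mulVec w ≤ M := by
    intro u hu w hw
    have s1 : u ⬝ᵥ A.mulVec w ≤ ⨆ _ : w ∈ B0 p k, u ⬝ᵥ A.mulVec w :=
      le_ciSup ⟨u ⬝ᵥ A.mulVec w, by rintro x ⟨_, rfl⟩; exact le_rfl⟩ hw
    have s2 : (⨆ _ : w ∈ B0 p k, u ⬝ᵥ A.mulVec w) ≤ ⨆ w ∈ B0 p k, u ⬝ᵥ A.mulVec w :=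
      le_ciSup (hbdd2 u hu) w
    have s3 : (⨆ w ∈ B0 p k, u ⬝ᵥ A.mulVec w) ≤
        ⨆ _ : u ∈ B0 p k, ⨆ w ∈ B0 p k, u ⬝ᵥ A.mulVec w :=
      le_ciSup ⟨⨆ w ∈ B0 p k, u ⬝ᵥ A.mulVec w, by rintro x ⟨_, rfl⟩; exact le_rfl⟩ hu
    have s4 : (⨆ _ : u ∈ B0 p k, ⨆ w ∈ B0 p k, u ⬝ᵥ A.mulVec w) ≤ M :=
      le_ciSup hbdd1 u
    exact le_trans s1 (le_trans s2 (le_trans s3 s4))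
  have hM0 : 0 ≤ M := by
    have h := hMdot 0 zero_mem_B0 0 zero_mem_B0
    rwa [zero_dotProduct] at h
  refine Real.iSup_le (fun v => Real.iSup_le (fun hv => ?_) ?_) ?_
  · exact key_norm hk hkp (A.mulVec v) M hM0 (fun u hu => hMdot u hu v hv)
  · exact mul_nonneg (Real.sqrt_nonneg _) hM0
  · exact mul_nonneg (Real.sqrt_nonneg _) hM0
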